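/- Let D ⊊ ℝⁿ (n ≥ 2) be a domain, x ∈ D, and t ∈ (0, log 2/(δ_D(x)(1 + log 2))). Then B_k(x, r) ⊂ B_c(x, t) ⊂ B_k(x, R), where r = log(1 + t δ_D(x)/(1 + t δ_D(x))) and R = log(1/(2 − exp(t δ_D(x)/(1 − t δ_D(x))))). -/

import Mathlib

open Metric Set

/-- Euclidean `n`-space. -/
abbrev E (n : ℕ) := EuclideanSpace ℝ (Fin n)

/-- The Cassinian metric of a domain `D`:
`c_D(x,y) = sup_{p ∈ ∂D} |x-y| / (|x-p| |p-y|)`. -/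
noncomputable def cassinian {n : ℕ} (D : Set (E n)) (x y : E n) : ℝ :=
  ⨆ p ∈ frontier D, dist x y / (dist x p * dist p y)

/-- The quasihyperbolic metric of a domain `D`:
`k_D(x,y) = inf_γ ∫_γ |dz| / δ_D(z)`, the infimum of the quasihyperbolic lengths of
curves in `D` joining `x` and `y`, where `δ_D(z) = dist(z, ∂D)`. -/
noncomputable def quasiHyperDist {n : ℕ} (D : Set (E n)) (x y : E n) : ℝ :=
  sInf {L : ℝ | ∃ γ : ℝ → E n, ContDiff ℝ 1 γ ∧ γ 0 = x ∧ γ 1 = y ∧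
    (∀ s ∈ Icc (0 : ℝ) 1, γ s ∈ D) ∧
    L = ∫ s in (0 : ℝ)..1, ‖deriv γ s‖ / infDist (γ s) (frontier D)}

section AuxC1

variable {V : Type*} [NormedAddCommGroup V] [NormedSpace ℝ V]

/-- A `C¹` curve from `x` to `y` inside `D`, constant near the endpoints. -/
def FlatJoined (D : Set V) (x y : V) : Prop :=
  ∃ γ : ℝ → V, ContDiff ℝ 1 γ ∧ (∀ s ∈ Icc (0:ℝ) 1, γ s ∈ D) ∧
    (∀ s : ℝ, s ≤ 1/3 → γ s = x) ∧ (∀ s : ℝ, 2/3 ≤ s → γ s = y)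

lemma flatJoined_of_c1 {D : Set V} {x y : V} (γ : ℝ → V) (hγ : ContDiff ℝ 1 γ)
    (h0 : γ 0 = x) (h1 : γ 1 = y) (hm : ∀ s ∈ Icc (0:ℝ) 1, γ s ∈ D) :
    FlatJoined D x y := by
  refine ⟨fun s => γ (Real.smoothTransition (3*s - 1)), ?_, ?_, ?_, ?_⟩
  · exact hγ.comp (Real.smoothTransition.contDiff.comp
      (((contDiff_const).mul contDiff_id).sub contDiff_const))
  · intro s _
    exact hm _ ⟨Real.smoothTransition.nonneg _, Real.smoothTransition.le_one _⟩
  · intro s hs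
    show γ (Real.smoothTransition (3*s - 1)) = x
    rw [Real.smoothTransition.zero_of_nonpos (show 3*s - 1 ≤ 0 by linarith), h0]
  · intro s hs
    show γ (Real.smoothTransition (3*s - 1)) = y
    rw [Real.smoothTransition.one_of_one_le (show (1:ℝ) ≤ 3*s - 1 by linarith), h1]

lemma flatJoined_of_segment {D : Set V} {x y : V}
    (h : ∀ s ∈ Icc (0:ℝ) 1, x + s • (y - x) ∈ D) : FlatJoined D x y := by
  refine flatJoined_of_c1 (fun s => x + s • (y - x)) ?_ (by simp) (by simp) h
  exact contDiff_const.add (contDiff_id.smul contDiff_const)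

lemma FlatJoined.c1 {D : Set V} {x y : V} (h : FlatJoined D x y) :
    ∃ γ : ℝ → V, ContDiff ℝ 1 γ ∧ γ 0 = x ∧ γ 1 = y ∧ ∀ s ∈ Icc (0:ℝ) 1, γ s ∈ D := by
  obtain ⟨γ, h1, h2, h3, h4⟩ := h
  exact ⟨γ, h1, h3 0 (by norm_num), h4 1 (by norm_num), h2⟩

lemma FlatJoined.trans {D : Set V} {x y z : V}
    (hxy : FlatJoined D x y) (hyz : FlatJoined D y z) : FlatJoined D x z := by
  obtain ⟨γ₁, hγ₁, hm₁, ha₁, hb₁⟩ := hxy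
  obtain ⟨γ₂, hγ₂, hm₂, ha₂, hb₂⟩ := hyz
  set γ : ℝ → V := fun s => if s ≤ 1/2 then γ₁ (2*s) else γ₂ (2*s - 1) with hγdef
  have key1 : ∀ s ∈ Iio (2/3 : ℝ), γ s = γ₁ (2*s) := by
    intro s hs
    simp only [hγdef]
    split_ifs with h
    · rfl
    · rw [ha₂ (2*s - 1) (by push_neg at h; simp at hs; linarith),
        hb₁ (2*s) (by push_neg at h; linarith)]
  have key2 : ∀ s ∈ Ioi (1/3 : ℝ), γ s = γ₂ (2*s - 1) := by
    intro s hs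
    simp only [hγdef]
    split_ifs with h
    · rw [hb₁ (2*s) (by simp at hs; linarith), ha₂ (2*s - 1) (by linarith)]
    · rfl
  have hc : ContDiff ℝ 1 γ := by
    rw [contDiff_iff_contDiffAt]
    intro s
    rcases lt_or_ge s (2/3 : ℝ) with h | h
    · have h1 : ContDiffAt ℝ 1 (fun s : ℝ => γ₁ (2*s)) s :=
        (hγ₁.comp (contDiff_const.mul contDiff_id)).contDiffAt
      refine h1.congr_of_eventuallyEq ?_
      filter_upwards [Iio_mem_nhds h] with u hu using key1 u hu
    · have h1 : ContDiffAt ℝ 1 (fun s : ℝ => γ₂ (2*s - 1)) s :=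
        (hγ₂.comp ((contDiff_const.mul contDiff_id).sub contDiff_const)).contDiffAt
      refine h1.congr_of_eventuallyEq ?_
      filter_upwards [Ioi_mem_nhds (show (1/3:ℝ) < s by linarith)] with u hu using key2 u hu
  refine flatJoined_of_c1 γ hc ?_ ?_ ?_
  · rw [key1 0 (by norm_num)]
    exact ha₁ (2*0) (by norm_num)
  · rw [key2 1 (by norm_num)]
    exact hb₂ (2*1 - 1) (by norm_num)
  · intro s hs
    simp only [hγdef]
    split_ifs with h
    · exact hm₁ _ ⟨by linarith [hs.1], by linarith⟩
    · push_neg at h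
      exact hm₂ _ ⟨by linarith, by linarith [hs.2]⟩

lemma exists_flatJoined {D : Set V} (hD : IsOpen D) (hconn : IsPreconnected D)
    {x y : V} (hx : x ∈ D) (hy : y ∈ D) : FlatJoined D x y := by
  by_contra hny
  set S : Set V := {z | z ∈ D ∧ FlatJoined D x z} with hSdef
  set T : Set V := D \ S with hTdef
  have base : ∀ c : V, ∀ ε > 0, ball c ε ⊆ D → ∀ z ∈ ball c ε, ∀ w ∈ ball c ε,
      FlatJoined D z w := by
    intro c ε hε hball z hz w hw
    refine flatJoined_of_segment ?_
    intro s hs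
    apply hball
    have : z + s • (w - z) = (1 - s) • (z - c) + s • (w - c) + c := by
      simp only [smul_sub, sub_smul, one_smul]; abel
    rw [mem_ball, dist_eq_norm, this]
    calc ‖(1 - s) • (z - c) + s • (w - c) + c - c‖
        = ‖(1 - s) • (z - c) + s • (w - c)‖ := by rw [add_sub_cancel_right]
      _ ≤ ‖(1 - s) • (z - c)‖ + ‖s • (w - c)‖ := norm_add_le _ _
      _ = (1 - s) * ‖z - c‖ + s * ‖w - c‖ := by
          rw [norm_smul, norm_smul, Real.norm_eq_abs, Real.norm_eq_abs,
            abs_of_nonneg (by linarith [hs.2]), abs_of_nonneg hs.1]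
      _ < (1 - s) * ε + s * ε := by
          rcases eq_or_lt_of_le hs.1 with h | h
          · rcases eq_or_lt_of_le hs.2 with h2 | h2
            · exfalso; rw [← h] at h2; norm_num at h2
            · have hz' : ‖z - c‖ < ε := by rw [← dist_eq_norm]; exact hz
              apply add_lt_add_of_lt_of_le
              · exact mul_lt_mul_of_pos_left hz' (by linarith)
              · rw [← h]; simp
          · have hw' : ‖w - c‖ < ε := by rw [← dist_eq_norm]; exact hw
            apply add_lt_add_of_le_of_lt
            · have hz' : ‖z - c‖ < ε := by rw [← dist_eq_norm]; exact hz
              exact mul_le_mul_of_nonneg_left hz'.le (by linarith [hs.2])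
            · exact mul_lt_mul_of_pos_left hw' h
      _ = ε := by ring
  have hSopen : IsOpen S := by
    rw [Metric.isOpen_iff]
    rintro z ⟨hzD, hzJ⟩
    obtain ⟨ε, hε, hball⟩ := Metric.isOpen_iff.1 hD z hzD
    refine ⟨ε, hε, fun w hw => ⟨hball hw, hzJ.trans ?_⟩⟩
    exact base z ε hε hball z (mem_ball_self hε) w hw
  have hTopen : IsOpen T := by
    rw [Metric.isOpen_iff]
    rintro z ⟨hzD, hzn⟩
    obtain ⟨ε, hε, hball⟩ := Metric.isOpen_iff.1 hD z hzD
    refine ⟨ε, hε, fun w hw => ⟨hball hw, fun hwS => hzn ⟨hzD, ?_⟩⟩⟩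
    exact hwS.2.trans (base z ε hε hball w hw z (mem_ball_self hε))
  have hxS : x ∈ S := ⟨hx, flatJoined_of_segment (by intro s _; simpa using hx)⟩
  have hyT : y ∈ T := ⟨hy, fun hS => hny hS.2⟩
  obtain ⟨p, hpD, hpS, hpT⟩ := hconn S T hSopen hTopen
    (fun z hz => by by_cases h : z ∈ S; exacts [Or.inl h, Or.inr ⟨hz, h⟩])
    ⟨x, hx, hxS⟩ ⟨y, hy, hyT⟩
  exact hpT.2 hpS

end AuxC1

/-- The ball of radius `infDist x (frontier D)` is inside the open set `D`. -/
lemma ball_infDist_frontier_subset {n : ℕ} {D : Set (E n)} (hD : IsOpen D)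
    {x : E n} (hx : x ∈ D) : ball x (infDist x (frontier D)) ⊆ D := by
  set δ := infDist x (frontier D) with hδdef
  intro z hz
  by_contra hzD
  have hδpos : 0 < δ := lt_of_le_of_lt dist_nonneg hz
  have hdisj : ∀ w ∈ ball x δ, w ∉ frontier D := by
    intro w hw hwf
    have h1 : δ ≤ dist x w := infDist_le_dist_of_mem hwf
    rw [mem_ball, dist_comm] at hw
    exact absurd h1 (not_le.2 hw)
  have hpre : IsPreconnected (ball x δ) :=
    ((convex_ball x δ).isPathConnected (by simp [hδpos])).isConnected.isPreconnected
  obtain ⟨p, -, hpD, hpC⟩ := hpre D (closure D)ᶜ hD (isClosed_closure.isOpen_compl)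
    (by
      intro w hw
      by_cases h : w ∈ D
      · exact Or.inl h
      · refine Or.inr fun hc => hdisj w hw ⟨hc, fun h2 => h (hD.interior_eq ▸ h2)⟩)
    ⟨x, mem_ball_self hδpos, hx⟩
    ⟨z, hz, fun hc => hdisj z hz ⟨hc, fun h2 => hzD (hD.interior_eq ▸ h2)⟩⟩
  exact hpC (subset_closure hpD)

lemma quasiHyperSet_bddBelow {n : ℕ} (D : Set (E n)) (x y : E n) :
    BddBelow {L : ℝ | ∃ γ : ℝ → E n, ContDiff ℝ 1 γ ∧ γ 0 = x ∧ γ 1 = y ∧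
      (∀ s ∈ Icc (0 : ℝ) 1, γ s ∈ D) ∧
      L = ∫ s in (0 : ℝ)..1, ‖deriv γ s‖ / infDist (γ s) (frontier D)} := by
  refine ⟨0, ?_⟩
  rintro L ⟨γ, -, -, -, -, rfl⟩
  exact intervalIntegral.integral_nonneg (by norm_num)
    (fun u _ => div_nonneg (norm_nonneg _) infDist_nonneg)

/-- Upper bound for the quasihyperbolic distance via the straight segment. -/
lemma quasiHyper_le_segment {n : ℕ} {D : Set (E n)} (hD : IsOpen D)
    {x y : E n} (hx : x ∈ D)
    (hd : dist x y < infDist x (frontier D)) :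
    quasiHyperDist D x y ≤
      Real.log (infDist x (frontier D)) - Real.log (infDist x (frontier D) - dist x y) := by
  set δ := infDist x (frontier D) with hδdef
  set d := dist x y with hddef
  have hd0 : 0 ≤ d := dist_nonneg
  have hδpos : 0 < δ := lt_of_le_of_lt hd0 hd
  set γ : ℝ → E n := fun s => x + s • (y - x) with hγdef
  have hderiv : ∀ s : ℝ, deriv γ s = y - x := by
    intro s
    have : HasDerivAt γ ((1:ℝ) • (y - x)) s := ((hasDerivAt_id s).smul_const (y - x)).const_add x
    rw [one_smul] at this
    exact this.deriv
  have hdist : ∀ s ∈ Icc (0:ℝ) 1, dist (γ s) x = s * d := by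
    intro s hs
    rw [hγdef]
    simp only [dist_eq_norm, add_sub_cancel_left]
    rw [norm_smul, Real.norm_eq_abs, abs_of_nonneg hs.1, hddef, dist_eq_norm, norm_sub_rev]
  have hmem : ∀ s ∈ Icc (0:ℝ) 1, γ s ∈ D := by
    intro s hs
    rcases eq_or_lt_of_le hd0 with h | h
    · have : γ s = x := by
        have := hdist s hs
        rw [← h, mul_zero] at this
        rwa [dist_eq_zero] at this
      rwa [this]
    · apply ball_infDist_frontier_subset hD hx
      rw [mem_ball, hdist s hs]
      calc s * d ≤ 1 * d := by nlinarith [hs.1, hs.2]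
        _ < δ := by rw [one_mul]; exact hd
  have hlow : ∀ s ∈ Icc (0:ℝ) 1, δ - s * d ≤ infDist (γ s) (frontier D) := by
    intro s hs
    have h1 : infDist x (frontier D) ≤ infDist (γ s) (frontier D) + dist x (γ s) :=
      infDist_le_infDist_add_dist
    rw [dist_comm, hdist s hs] at h1
    linarith
  have hposlin : ∀ s ∈ Icc (0:ℝ) 1, 0 < δ - s * d := by
    intro s hs
    have : s * d ≤ d := by nlinarith [hs.1, hs.2]
    linarith
  -- the element of the defining set
  have hγC1 : ContDiff ℝ 1 γ := contDiff_const.add (contDiff_id.smul contDiff_const)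
  have hmemSet : (∫ s in (0:ℝ)..1, ‖deriv γ s‖ / infDist (γ s) (frontier D)) ∈
      {L : ℝ | ∃ γ : ℝ → E n, ContDiff ℝ 1 γ ∧ γ 0 = x ∧ γ 1 = y ∧
        (∀ s ∈ Icc (0 : ℝ) 1, γ s ∈ D) ∧
        L = ∫ s in (0 : ℝ)..1, ‖deriv γ s‖ / infDist (γ s) (frontier D)} :=
    ⟨γ, hγC1, by simp [hγdef], by simp [hγdef], hmem, rfl⟩
  refine le_trans (csInf_le (quasiHyperSet_bddBelow D x y) hmemSet) ?_
  -- now bound the integral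
  have hcγ : Continuous γ := hγC1.continuous
  have hInt2 : IntervalIntegrable (fun s => d / (δ - s * d)) MeasureTheory.volume 0 1 := by
    apply ContinuousOn.intervalIntegrable
    rw [uIcc_of_le (by norm_num : (0:ℝ) ≤ 1)]
    exact continuousOn_const.div
      ((continuous_const.sub (continuous_id.mul continuous_const)).continuousOn)
      (fun s hs => (hposlin s hs).ne')
  have hInt1 : IntervalIntegrable (fun s => ‖deriv γ s‖ / infDist (γ s) (frontier D))
      MeasureTheory.volume 0 1 := by
    apply ContinuousOn.intervalIntegrable
    rw [uIcc_of_le (by norm_num : (0:ℝ) ≤ 1)]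
    refine ContinuousOn.div ?_ ((continuous_infDist_pt _).comp hcγ).continuousOn ?_
    · have : (fun s : ℝ => ‖deriv γ s‖) = fun _ => ‖y - x‖ := funext fun s => by rw [hderiv s]
      rw [this]; exact continuousOn_const
    · intro s hs
      exact ne_of_gt (lt_of_lt_of_le (hposlin s hs) (hlow s hs))
  have hmono : (∫ s in (0:ℝ)..1, ‖deriv γ s‖ / infDist (γ s) (frontier D)) ≤
      ∫ s in (0:ℝ)..1, d / (δ - s * d) := by
    apply intervalIntegral.integral_mono_on (by norm_num) hInt1 hInt2
    intro s hs
    rw [hderiv s]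
    have h1 : ‖y - x‖ = d := by rw [hddef, dist_eq_norm, norm_sub_rev]
    rw [h1]
    exact div_le_div_of_nonneg_left hd0 (hposlin s hs) (hlow s hs)
  have hcalc : (∫ s in (0:ℝ)..1, d / (δ - s * d)) = Real.log δ - Real.log (δ - d) := by
    have hFT : ∀ s ∈ uIcc (0:ℝ) 1, HasDerivAt (fun u => -Real.log (δ - u * d))
        (d / (δ - s * d)) s := by
      intro s hs
      rw [uIcc_of_le (by norm_num : (0:ℝ) ≤ 1)] at hs
      have hg : HasDerivAt (fun u : ℝ => δ - u * d) (-(1 * d)) s :=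
        ((hasDerivAt_id s).mul_const d).const_sub δ
      have hlog := (Real.hasDerivAt_log (hposlin s hs).ne').comp s hg
      have := hlog.neg
      refine this.congr_deriv ?_
      rw [div_eq_inv_mul, mul_neg, neg_neg, one_mul]
    rw [intervalIntegral.integral_eq_sub_of_hasDerivAt hFT hInt2]
    simp only [one_mul, zero_mul, sub_zero]
    ring
  rw [← hcalc]
  exact hmono

/-- Lower bound for the quasihyperbolic length of any admissible curve. -/
lemma log_le_curve_integral {n : ℕ} {D : Set (E n)} (hD : IsOpen D)
    (hfr : (frontier D).Nonempty) {x y : E n} (hx : x ∈ D)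
    (γ : ℝ → E n) (hγ : ContDiff ℝ 1 γ) (h0 : γ 0 = x) (h1 : γ 1 = y)
    (hm : ∀ s ∈ Icc (0:ℝ) 1, γ s ∈ D) :
    Real.log (1 + dist x y / infDist x (frontier D)) ≤
      ∫ s in (0:ℝ)..1, ‖deriv γ s‖ / infDist (γ s) (frontier D) := by
  set δ := infDist x (frontier D) with hδdef
  have hfrc : IsClosed (frontier D) := isClosed_frontier
  have hposD : ∀ z ∈ D, 0 < infDist z (frontier D) := by
    intro z hz
    refine (hfrc.notMem_iff_infDist_pos hfr).1 ?_
    intro hzf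
    exact (hD.inter_frontier_eq ▸ (mem_inter hz hzf) : z ∈ (∅ : Set (E n)))
  have hδpos : 0 < δ := hposD x hx
  have hcont : Continuous (deriv γ) := hγ.continuous_deriv le_rfl
  set ℓ : ℝ → ℝ := fun s => ∫ u in (0:ℝ)..s, ‖deriv γ u‖ with hℓdef
  have hℓd : ∀ s : ℝ, HasDerivAt ℓ ‖deriv γ s‖ s := fun s =>
    ((hcont.norm).integral_hasStrictDerivAt 0 s).hasDerivAt
  have hℓcont : Continuous ℓ := by
    rw [continuous_iff_continuousAt]; exact fun s => (hℓd s).continuousAt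
  have hℓnonneg : ∀ s ∈ Icc (0:ℝ) 1, 0 ≤ ℓ s := fun s hs =>
    intervalIntegral.integral_nonneg hs.1 (fun u _ => norm_nonneg _)
  have hchord : ∀ s ∈ Icc (0:ℝ) 1, dist (γ s) x ≤ ℓ s := by
    intro s hs
    have heq : (∫ u in (0:ℝ)..s, deriv γ u) = γ s - γ 0 :=
      intervalIntegral.integral_deriv_eq_sub
        (fun u _ => (hγ.differentiable one_ne_zero).differentiableAt)
        (hcont.intervalIntegrable 0 s)
    rw [← h0, dist_eq_norm, ← heq]
    exact intervalIntegral.norm_integral_le_integral_norm hs.1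
  have hup : ∀ s ∈ Icc (0:ℝ) 1, infDist (γ s) (frontier D) ≤ δ + ℓ s := by
    intro s hs
    have h2 : infDist (γ s) (frontier D) ≤ infDist x (frontier D) + dist (γ s) x :=
      infDist_le_infDist_add_dist
    linarith [hchord s hs]
  have hposγ : ∀ s ∈ Icc (0:ℝ) 1, 0 < infDist (γ s) (frontier D) :=
    fun s hs => hposD _ (hm s hs)
  have hpost : ∀ s ∈ Icc (0:ℝ) 1, 0 < δ + ℓ s := fun s hs => by
    linarith [hℓnonneg s hs]
  have hInt2 : IntervalIntegrable (fun s => ‖deriv γ s‖ / infDist (γ s) (frontier D))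
      MeasureTheory.volume 0 1 := by
    apply ContinuousOn.intervalIntegrable
    rw [uIcc_of_le (by norm_num : (0:ℝ) ≤ 1)]
    exact (hcont.norm.continuousOn).div
      (((continuous_infDist_pt _).comp hγ.continuous).continuousOn)
      (fun s hs => (hposγ s hs).ne')
  have hInt1 : IntervalIntegrable (fun s => ‖deriv γ s‖ / (δ + ℓ s))
      MeasureTheory.volume 0 1 := by
    apply ContinuousOn.intervalIntegrable
    rw [uIcc_of_le (by norm_num : (0:ℝ) ≤ 1)]
    exact (hcont.norm.continuousOn).div
      ((continuous_const.add hℓcont).continuousOn)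
      (fun s hs => (hpost s hs).ne')
  have hmono : (∫ s in (0:ℝ)..1, ‖deriv γ s‖ / (δ + ℓ s)) ≤
      ∫ s in (0:ℝ)..1, ‖deriv γ s‖ / infDist (γ s) (frontier D) := by
    apply intervalIntegral.integral_mono_on (by norm_num) hInt1 hInt2
    intro s hs
    exact div_le_div_of_nonneg_left (norm_nonneg _) (hposγ s hs) (hup s hs)
  have hcalc : (∫ s in (0:ℝ)..1, ‖deriv γ s‖ / (δ + ℓ s)) =
      Real.log (δ + ℓ 1) - Real.log (δ + ℓ 0) := by
    have hFT : ∀ s ∈ uIcc (0:ℝ) 1, HasDerivAt (fun u => Real.log (δ + ℓ u))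
        (‖deriv γ s‖ / (δ + ℓ s)) s := by
      intro s hs
      rw [uIcc_of_le (by norm_num : (0:ℝ) ≤ 1)] at hs
      have hg : HasDerivAt (fun u : ℝ => δ + ℓ u) ‖deriv γ s‖ s := (hℓd s).const_add δ
      have hlog := (Real.hasDerivAt_log (hpost s hs).ne').comp s hg
      refine hlog.congr_deriv ?_
      rw [div_eq_inv_mul]
    rw [intervalIntegral.integral_eq_sub_of_hasDerivAt hFT hInt1]
  have hℓ0 : ℓ 0 = 0 := intervalIntegral.integral_same
  have hd1 : dist x y ≤ ℓ 1 := by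
    have := hchord 1 (by norm_num)
    rw [h1, dist_comm] at this
    exact this
  have hfin : Real.log (1 + dist x y / δ) ≤ Real.log (δ + ℓ 1) - Real.log δ := by
    have heq : Real.log (1 + dist x y / δ) = Real.log (δ + dist x y) - Real.log δ := by
      rw [← Real.log_div (by positivity) hδpos.ne']
      congr 1
      field_simp
    rw [heq]
    have : Real.log (δ + dist x y) ≤ Real.log (δ + ℓ 1) :=
      Real.log_le_log (by positivity) (by linarith)
    linarith
  calc Real.log (1 + dist x y / δ) ≤ Real.log (δ + ℓ 1) - Real.log δ := hfin
    _ = ∫ s in (0:ℝ)..1, ‖deriv γ s‖ / (δ + ℓ s) := by rw [hcalc, hℓ0, add_zero]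
    _ ≤ _ := hmono

lemma infDist_frontier_pos {n : ℕ} {D : Set (E n)} (hD : IsOpen D)
    (hfr : (frontier D).Nonempty) {z : E n} (hz : z ∈ D) :
    0 < infDist z (frontier D) := by
  refine (isClosed_frontier.notMem_iff_infDist_pos hfr).1 ?_
  intro hzf
  exact (hD.inter_frontier_eq ▸ (mem_inter hz hzf) : z ∈ (∅ : Set (E n)))

lemma cassinian_le {n : ℕ} {D : Set (E n)} {x y : E n} {B : ℝ} (hB : 0 ≤ B)
    (h : ∀ p ∈ frontier D, dist x y / (dist x p * dist p y) ≤ B) :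
    cassinian D x y ≤ B :=
  Real.iSup_le (fun p => Real.iSup_le (fun hp => h p hp) hB) hB

lemma le_cassinian {n : ℕ} {D : Set (E n)} (hD : IsOpen D) (hfr : (frontier D).Nonempty)
    {x y : E n} (hx : x ∈ D) (hy : y ∈ D) {p : E n} (hp : p ∈ frontier D) :
    dist x y / (dist x p * dist p y) ≤ cassinian D x y := by
  have hδx : 0 < infDist x (frontier D) := infDist_frontier_pos hD hfr hx
  have hδy : 0 < infDist y (frontier D) := infDist_frontier_pos hD hfr hy
  have hbdd : BddAbove (range fun q : E n =>
      ⨆ _ : q ∈ frontier D, dist x y / (dist x q * dist q y)) := by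
    refine ⟨dist x y / (infDist x (frontier D) * infDist y (frontier D)), ?_⟩
    rintro _ ⟨q, rfl⟩
    refine Real.iSup_le (fun hq => ?_) (by positivity)
    have h1 : infDist x (frontier D) ≤ dist x q := infDist_le_dist_of_mem hq
    have h2 : infDist y (frontier D) ≤ dist q y := by
      rw [dist_comm]; exact infDist_le_dist_of_mem hq
    exact div_le_div_of_nonneg_left dist_nonneg (by positivity)
      (mul_le_mul h1 h2 hδy.le dist_nonneg)
  calc dist x y / (dist x p * dist p y)
      = ⨆ _ : p ∈ frontier D, dist x y / (dist x p * dist p y) :=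
        (ciSup_pos (p := p ∈ frontier D) (f := fun _ => dist x y / (dist x p * dist p y)) hp).symm
    _ ≤ cassinian D x y := le_ciSup hbdd p

set_option maxHeartbeats 2000000 in
/-- **Inclusion of Cassinian balls between quasihyperbolic balls.**
Let `D ⊊ ℝⁿ` be a domain, `x ∈ D` and `0 < t < log 2/(δ_D(x)(1 + log 2))`.  Then
`B_k(x,r) ⊆ B_c(x,t) ⊆ B_k(x,R)` with `r = log(1 + t δ_D(x)/(1+t δ_D(x)))` and
`R = log(1/(2 - exp(t δ_D(x)/(1-t δ_D(x)))))`. -/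
theorem quasihyperbolicBall_subset_cassinianBall_subset (n : ℕ) (hn : 2 ≤ n)
    (D : Set (E n)) (hD : IsOpen D) (hDconn : IsConnected D) (hDproper : D ≠ univ)
    (x : E n) (hx : x ∈ D) (t : ℝ) (ht : 0 < t)
    (ht1 : t < Real.log 2 / (infDist x (frontier D) * (1 + Real.log 2))) :
    {y ∈ D | quasiHyperDist D x y
          < Real.log (1 + t * infDist x (frontier D) / (1 + t * infDist x (frontier D)))}
        ⊆ {y ∈ D | cassinian D x y < t} ∧
      {y ∈ D | cassinian D x y < t}
        ⊆ {y ∈ D | quasiHyperDist D x y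
          < Real.log (1 / (2 - Real.exp
              (t * infDist x (frontier D) / (1 - t * infDist x (frontier D)))))} := by
  have hfr : (frontier D).Nonempty := nonempty_frontier_iff.2 ⟨hDconn.nonempty, hDproper⟩
  set δ := infDist x (frontier D) with hδdef
  have hδ : 0 < δ := infDist_frontier_pos hD hfr hx
  clear_value δ
  have hlog2 : 0 < Real.log 2 := Real.log_pos one_lt_two
  have hu2 : t * δ * (1 + Real.log 2) < Real.log 2 := by
    have h := (lt_div_iff₀ (by positivity : (0:ℝ) < δ * (1 + Real.log 2))).1 ht1
    nlinarith [h]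
  have hu0 : 0 < t * δ := by positivity
  have hu1 : t * δ < 1 := by nlinarith
  constructor
  · rintro y ⟨hyD, hyk⟩
    refine ⟨hyD, ?_⟩
    have hd0 : 0 ≤ dist x y := dist_nonneg
    obtain ⟨γ0, hγ0, h00, h01, h0m⟩ :=
      (exists_flatJoined hD hDconn.isPreconnected hx hyD).c1
    have hne : Set.Nonempty {L : ℝ | ∃ γ : ℝ → E n, ContDiff ℝ 1 γ ∧ γ 0 = x ∧ γ 1 = y ∧
        (∀ s ∈ Icc (0 : ℝ) 1, γ s ∈ D) ∧
        L = ∫ s in (0 : ℝ)..1, ‖deriv γ s‖ / infDist (γ s) (frontier D)} :=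
      ⟨_, γ0, hγ0, h00, h01, h0m, rfl⟩
    obtain ⟨L, hLmem, hLlt⟩ := exists_lt_of_csInf_lt hne hyk
    obtain ⟨γ, hγ, hg0, hg1, hgm, rfl⟩ := hLmem
    have hlow := log_le_curve_integral hD hfr hx γ hγ hg0 hg1 hgm
    rw [← hδdef] at hlow
    have hlt : Real.log (1 + dist x y / δ) < Real.log (1 + t * δ / (1 + t * δ)) :=
      lt_of_le_of_lt hlow hLlt
    have hden : 0 < 1 + t * δ := by linarith
    have hq : 0 < t * δ / (1 + t * δ) := div_pos hu0 hden
    have harg : 1 + dist x y / δ < 1 + t * δ / (1 + t * δ) := by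
      rwa [Real.log_lt_log_iff (show (0:ℝ) < 1 + dist x y / δ by positivity)
        (by linarith)] at hlt
    have hkey : dist x y * (1 + t * δ) < t * δ * δ := by
      have h1 : dist x y / δ < t * δ / (1 + t * δ) := by linarith
      rw [div_lt_div_iff₀ hδ (by positivity)] at h1
      nlinarith [h1]
    clear hyk hne hLlt hlow hlt hγ0 h00 h01 h0m hγ hg0 hg1 hgm
    have hdδ : dist x y < δ := by nlinarith
    have hBpos : 0 < δ * (δ - dist x y) := by nlinarith
    have hB : cassinian D x y ≤ dist x y / (δ * (δ - dist x y)) := by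
      apply cassinian_le (by positivity)
      intro p hp
      have ha : δ ≤ dist x p := by rw [hδdef]; exact infDist_le_dist_of_mem hp
      have hb : dist x p - dist x y ≤ dist p y := by
        have h2 : dist p x ≤ dist p y + dist y x := dist_triangle p y x
        rw [dist_comm p x, dist_comm y x] at h2
        linarith
      have hc : δ * (δ - dist x y) ≤ dist x p * (dist x p - dist x y) := by nlinarith
      have hc2 : dist x p * (dist x p - dist x y) ≤ dist x p * dist p y :=
        mul_le_mul_of_nonneg_left hb (hδ.le.trans ha)
      exact div_le_div_of_nonneg_left hd0 hBpos (hc.trans hc2)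
    refine lt_of_le_of_lt hB ?_
    rw [div_lt_iff₀ hBpos]
    nlinarith [hkey]
  · rintro y ⟨hyD, hyc⟩
    refine ⟨hyD, ?_⟩
    have hd0 : 0 ≤ dist x y := dist_nonneg
    have hδy : 0 < infDist y (frontier D) := infDist_frontier_pos hD hfr hyD
    obtain ⟨p, hpF, hpd⟩ := isClosed_frontier.exists_infDist_eq_dist hfr x
    have hple : dist x y / (dist x p * dist p y) ≤ cassinian D x y :=
      le_cassinian hD hfr hx hyD hpF
    have hxp : dist x p = δ := by rw [hδdef]; exact hpd.symm
    have hpy0 : 0 < dist p y := by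
      have h1 : infDist y (frontier D) ≤ dist y p := infDist_le_dist_of_mem hpF
      rw [dist_comm]
      linarith
    have hlt : dist x y / (δ * dist p y) < t := by
      rw [← hxp]
      exact lt_of_le_of_lt hple hyc
    clear hyc hple
    have hpy : dist p y ≤ δ + dist x y := by
      have h1 := dist_triangle p x y
      rw [dist_comm p x, hxp] at h1
      linarith
    have hd1 : dist x y < t * δ * dist p y := by
      rw [div_lt_iff₀ (by positivity)] at hlt
      nlinarith [hlt]
    have hkey : dist x y * (1 - t * δ) < t * δ * δ := by nlinarith
    have h1u : 0 < 1 - t * δ := by linarith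
    have hv0 : 0 < t * δ / (1 - t * δ) := by positivity
    set v := t * δ / (1 - t * δ) with hvdef
    clear_value v
    have hv1 : v < Real.log 2 := by
      rw [hvdef, div_lt_iff₀ h1u]
      nlinarith
    have hdv : dist x y < δ * v := by
      have h5 : δ * v = t * δ * δ / (1 - t * δ) := by rw [hvdef]; ring
      rw [h5, lt_div_iff₀ h1u]
      linarith [hkey]
    have hvlt1 : v < 1 := by
      have h2 : Real.log 2 < 1 := by
        have := Real.log_two_lt_d9
        linarith
      linarith
    have hddelta : dist x y < δ := by nlinarith
    have hseg := quasiHyper_le_segment hD hx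
      (show dist x y < infDist x (frontier D) from hδdef ▸ hddelta)
    rw [← hδdef] at hseg
    have hev : Real.exp v < 2 := by
      have h3 := Real.exp_lt_exp.2 hv1
      rwa [Real.exp_log two_pos] at h3
    have h2e : 0 < 2 - Real.exp v := by linarith
    have h1v : 2 - Real.exp v < 1 - v := by
      have := Real.add_one_lt_exp hv0.ne'
      linarith
    have hδd : δ * (2 - Real.exp v) < δ - dist x y := by nlinarith
    have hδdpos : 0 < δ - dist x y := by nlinarith [mul_pos hδ h2e]
    have hfin : Real.log δ - Real.log (δ - dist x y) <
        Real.log (1 / (2 - Real.exp v)) := by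
      rw [← Real.log_div hδ.ne' hδdpos.ne']
      apply Real.log_lt_log (by positivity)
      rw [div_lt_div_iff₀ hδdpos h2e]
      nlinarith [hδd]
    exact lt_of_le_of_lt hseg hfin
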